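/- Let H ⊆ L⁰_{b-} be monotone and normalized, and define φ(f) := inf{m ∈ ℝ : m + h ≥ f pointwise for some h ∈ H}. Then for every Borel probability measure μ on Ω one has sup_{f ∈ C_b} (⟨f,μ⟩ − φ(f)) = sup_{f ∈ H∩C_b} ⟨f,μ⟩ and sup_{f ∈ U_b} (⟨f,μ⟩ − φ(f)) = sup_{f ∈ H∩U_b} ⟨f,μ⟩; moreover, for every μ ∈ ca₊ that is not a probability measure, sup_{f ∈ C_b} (⟨f,μ⟩ − φ(f)) = +∞. -/

import Mathlib

open MeasureTheory Filter ENNReal NNReal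

/-- Positive part of an extended real number, as an element of `[0,∞]`. -/
noncomputable def ERealPosPart (x : EReal) : ℝ≥0∞ :=
  if x = ⊤ then ⊤ else ENNReal.ofReal x.toReal

section Defs

variable {Ω : Type*} [TopologicalSpace Ω] [MeasurableSpace Ω]

/-- The pairing `⟨f,μ⟩ = ∫ f dμ` for an extended-real-valued function `f`; for `f` bounded
from below and `μ` a finite measure this is the usual (extended-valued) integral. -/
noncomputable def ePair (f : Ω → EReal) (μ : Measure Ω) : EReal :=
  ((∫⁻ x, ERealPosPart (f x) ∂μ : ℝ≥0∞) : EReal) -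
    ((∫⁻ x, ERealPosPart (-f x) ∂μ : ℝ≥0∞) : EReal)

/-- `L⁰_{b-}`: the set of Borel measurable functions `Ω → ℝ ∪ {+∞}` which are bounded from
below (modelled as `EReal`-valued functions bounded below by a real constant). -/
def L0b : Set (Ω → EReal) :=
  {f | Measurable f ∧ ∃ c : ℝ, ∀ x, (c : EReal) ≤ f x}

/-- `H ⊆ L⁰_{b-}` is monotone: `f ∈ H` whenever `f ∈ L⁰_{b-}` satisfies `f ≤ h` for some
`h ∈ H`. -/
def MonotoneB (H : Set (Ω → EReal)) : Prop :=
  ∀ f ∈ L0b, (∃ h ∈ H, ∀ x, f x ≤ h x) → f ∈ H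

/-- `H` is normalized: the constant function `0` belongs to `H` and no constant
function `ε > 0` belongs to `H`. -/
def NormalizedB (H : Set (Ω → EReal)) : Prop :=
  (fun _ => (0 : EReal)) ∈ H ∧ ∀ ε : ℝ, 0 < ε → (fun _ => (ε : EReal)) ∉ H

/-- `H` is tight: for every constant `m ∈ ℝ` with `m ∈ H`, every `n ∈ ℕ` and `ε > 0` there
is a compact `K ⊆ Ω` with `m − ε + n·1_{Kᶜ} ∈ H`. -/
def TightB (H : Set (Ω → EReal)) : Prop :=
  ∀ m : ℝ, (fun _ => (m : EReal)) ∈ H → ∀ n : ℕ, ∀ ε : ℝ, 0 < ε →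
    ∃ K : Set Ω, IsCompact K ∧
      (fun x => (m : EReal) - (ε : EReal) + (Kᶜ).indicator (fun _ => (n : EReal)) x) ∈ H

/-- `H` is closed under `liminf`: `liminf_n h_n ∈ H` for every sequence `(h_n)` in `H`
with `h_n ≥ c` for some constant `c ∈ ℝ`. -/
def LiminfClosedB (H : Set (Ω → EReal)) : Prop :=
  ∀ h : ℕ → Ω → EReal, (∀ n, h n ∈ H) → (∃ c : ℝ, ∀ n x, (c : EReal) ≤ h n x) →
    (fun x => liminf (fun n => h n x) atTop) ∈ H

/-- `H` is convex. -/
def ConvexB (H : Set (Ω → EReal)) : Prop :=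
  ∀ f ∈ H, ∀ g ∈ H, ∀ t : ℝ, 0 ≤ t → t ≤ 1 →
    (fun x => (t : EReal) * f x + ((1 - t : ℝ) : EReal) * g x) ∈ H

/-- `h` is (the coercion of) a bounded continuous real-valued function. -/
def IsCbB (h : Ω → EReal) : Prop :=
  Continuous h ∧ ∃ C : ℝ, ∀ x, -(C : EReal) ≤ h x ∧ h x ≤ (C : EReal)

/-- `h` is (the coercion of) a bounded upper semicontinuous real-valued function. -/
def IsUbB (h : Ω → EReal) : Prop :=
  UpperSemicontinuous h ∧ ∃ C : ℝ, ∀ x, -(C : EReal) ≤ h x ∧ h x ≤ (C : EReal)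

/-- `H` is regular: for every Borel probability measure `μ`, the supremum of `⟨h,μ⟩` over
`H ∩ U_b` coincides with the supremum over `H ∩ C_b`. -/
def RegularB (H : Set (Ω → EReal)) : Prop :=
  ∀ μ : Measure Ω, IsProbabilityMeasure μ →
    sSup {x : EReal | ∃ h ∈ H, IsUbB h ∧ x = ePair h μ} =
      sSup {x : EReal | ∃ h ∈ H, IsCbB h ∧ x = ePair h μ}

/-- The polar `H°` of `H ⊆ L⁰_{b-}`: all finite positive Borel measures `μ` with
`⟨f,μ⟩ ≤ 1` for all `f ∈ H`. -/
def polarB (H : Set (Ω → EReal)) : Set (Measure Ω) :=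
  {μ | IsFiniteMeasure μ ∧ ∀ f ∈ H, ePair f μ ≤ 1}

/-- The bipolar `H°°` of `H ⊆ L⁰_{b-}`. -/
def bipolarB (H : Set (Ω → EReal)) : Set (Ω → EReal) :=
  {f | f ∈ L0b ∧ ∀ μ ∈ polarB H, ePair f μ ≤ 1}

/-- The superhedging functional `φ(f) = inf{m ∈ ℝ : m + h ≥ f for some h ∈ H}` (the
infimum of the empty set being `+∞`). -/
noncomputable def sprice (H : Set (Ω → EReal)) (f : Ω → EReal) : EReal :=
  sInf ((fun m : ℝ => (m : EReal)) ''
    {m : ℝ | ∃ h ∈ H, ∀ x, f x ≤ (m : EReal) + h x})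

end Defs

section AuxBK

set_option linter.unusedSectionVars false

variable {Ω : Type*} [MeasurableSpace Ω]

private lemma ERealPosPart_coe_BK (r : ℝ) : ERealPosPart ((r : ℝ) : EReal) = ENNReal.ofReal r := by
  simp [ERealPosPart]

private lemma coe_ennreal_sub_coe_BK (a b : ℝ≥0∞) (ha : a ≠ ⊤) (hb : b ≠ ⊤) :
    (a : EReal) - (b : EReal) = ((a.toReal - b.toReal : ℝ) : EReal) := by
  have h1 : ((a.toReal : ℝ) : EReal) = (a : EReal) := by
    rw [← EReal.toReal_coe_ennreal]
    exact EReal.coe_toReal (by simpa using ha) (EReal.coe_ennreal_ne_bot a)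
  have h2 : ((b.toReal : ℝ) : EReal) = (b : EReal) := by
    rw [← EReal.toReal_coe_ennreal]
    exact EReal.coe_toReal (by simpa using hb) (EReal.coe_ennreal_ne_bot b)
  rw [EReal.coe_sub, h1, h2]

private lemma integrable_of_abs_le_BK (μ : Measure Ω) [IsFiniteMeasure μ] {g : Ω → ℝ}
    (hg : Measurable g) {C : ℝ} (hb : ∀ x, |g x| ≤ C) : Integrable g μ :=
  ⟨hg.aestronglyMeasurable, HasFiniteIntegral.of_bounded (C := C)
    (ae_of_all _ fun x => by simpa [Real.norm_eq_abs] using hb x)⟩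

private lemma ePair_coe_BK [TopologicalSpace Ω] (μ : Measure Ω) [IsFiniteMeasure μ] {g : Ω → ℝ}
    (hg : Measurable g) {C : ℝ} (hb : ∀ x, |g x| ≤ C) :
    ePair (fun x => (g x : EReal)) μ = ((∫ x, g x ∂μ : ℝ) : EReal) := by
  have hint : Integrable g μ := integrable_of_abs_le_BK μ hg hb
  have hfin : ∀ f : Ω → ℝ, (∀ x, |f x| ≤ C) → (∫⁻ x, ENNReal.ofReal (f x) ∂μ) ≠ ⊤ := by
    intro f hf
    have hle : (∫⁻ x, ENNReal.ofReal (f x) ∂μ) ≤ ∫⁻ _, ENNReal.ofReal C ∂μ :=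
      lintegral_mono fun x => ENNReal.ofReal_le_ofReal ((le_abs_self _).trans (hf x))
    refine ne_of_lt (lt_of_le_of_lt hle ?_)
    rw [lintegral_const]
    exact ENNReal.mul_lt_top ofReal_lt_top (measure_lt_top μ _)
  have e1 : (fun x => ERealPosPart ((g x : EReal))) = fun x => ENNReal.ofReal (g x) :=
    funext fun x => ERealPosPart_coe_BK _
  have e2 : (fun x => ERealPosPart (-(g x : EReal))) = fun x => ENNReal.ofReal (-g x) :=
    funext fun x => by rw [← EReal.coe_neg]; exact ERealPosPart_coe_BK _
  rw [ePair, e1, e2, coe_ennreal_sub_coe_BK _ _ (hfin g hb)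
    (hfin (fun x => -g x) (fun x => by simpa [abs_neg] using hb x)),
    integral_eq_lintegral_pos_part_sub_lintegral_neg_part hint]

variable {H : Set (Ω → EReal)}

private lemma mem_lb_BK (hmono : MonotoneB H) (hnorm : NormalizedB H)
    {h : Ω → EReal} {C : ℝ} (hC : ∀ x, -(C : EReal) ≤ h x)
    {m : ℝ} (hm : ∃ h' ∈ H, ∀ x, h x ≤ (m : EReal) + h' x) : -C ≤ m := by
  obtain ⟨h', hH, hle⟩ := hm
  have key : ∀ x, ((-C - m : ℝ) : EReal) ≤ h' x := by
    intro x
    rw [EReal.coe_sub]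
    refine (EReal.sub_le_iff_le_add (Or.inl (EReal.coe_ne_bot m))
      (Or.inl (EReal.coe_ne_top m))).2 ?_
    calc ((-C : ℝ) : EReal) = -(C : EReal) := EReal.coe_neg C
      _ ≤ h x := hC x
      _ ≤ (m : EReal) + h' x := hle x
      _ = h' x + (m : EReal) := add_comm _ _
  have hmem : (fun _ : Ω => ((-C - m : ℝ) : EReal)) ∈ H :=
    hmono _ ⟨measurable_const, ⟨-C - m, fun _ => le_rfl⟩⟩ ⟨h', hH, fun x => key x⟩
  by_contra hlt
  push_neg at hlt
  exact hnorm.2 _ (by linarith) hmem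

private lemma sprice_le_of_mem_BK {h : Ω → EReal} {m : ℝ}
    (hm : ∃ h' ∈ H, ∀ x, h x ≤ (m : EReal) + h' x) : sprice H h ≤ (m : EReal) :=
  sInf_le ⟨m, hm, rfl⟩

private lemma sprice_const_BK (hmono : MonotoneB H) (hnorm : NormalizedB H) (c : ℝ) :
    sprice H (fun _ : Ω => (c : EReal)) = (c : EReal) := by
  refine le_antisymm (sprice_le_of_mem_BK ⟨fun _ => 0, hnorm.1, fun x => by simp⟩) (le_sInf ?_)
  rintro y ⟨m, hm, rfl⟩
  have := mem_lb_BK hmono hnorm (h := fun _ : Ω => (c : EReal)) (C := -c)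
    (fun x => by rw [← EReal.coe_neg, neg_neg]) hm
  rw [neg_neg] at this
  exact EReal.coe_le_coe_iff.2 this

private lemma bounds_sub_const_BK {h : Ω → EReal} {C : ℝ}
    (hb : ∀ x, -(C : EReal) ≤ h x ∧ h x ≤ (C : EReal)) (m : ℝ) :
    ∀ x, -(((C + |m| : ℝ)) : EReal) ≤ h x - (m : EReal) ∧
      h x - (m : EReal) ≤ ((C + |m| : ℝ) : EReal) := by
  intro x
  constructor
  · calc -(((C + |m| : ℝ)) : EReal) = ((-(C + |m|) : ℝ) : EReal) := (EReal.coe_neg _).symm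
      _ ≤ ((-C - m : ℝ) : EReal) := by
        refine EReal.coe_le_coe_iff.2 ?_
        have h1 := le_abs_self m; have h2 := neg_le_abs m
        linarith
      _ = ((-C : ℝ) : EReal) - (m : EReal) := EReal.coe_sub _ _
      _ ≤ h x - (m : EReal) :=
        EReal.sub_le_sub (by rw [EReal.coe_neg]; exact (hb x).1) le_rfl
  · calc h x - (m : EReal) ≤ (C : EReal) - (m : EReal) := EReal.sub_le_sub (hb x).2 le_rfl
      _ = ((C - m : ℝ) : EReal) := (EReal.coe_sub _ _).symm
      _ ≤ ((C + |m| : ℝ) : EReal) := by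
        refine EReal.coe_le_coe_iff.2 ?_
        have h1 := le_abs_self m; have h2 := neg_le_abs m
        linarith

private lemma key_prob_BK [TopologicalSpace Ω]
    (hmono : MonotoneB H) (hnorm : NormalizedB H)
    (P : (Ω → EReal) → Prop)
    (hPm : ∀ h, P h → Measurable h)
    (hPb : ∀ h, P h → ∃ C : ℝ, ∀ x, -(C : EReal) ≤ h x ∧ h x ≤ (C : EReal))
    (hPsub : ∀ (h : Ω → EReal) (m : ℝ), P h → P (fun x => h x - (m : EReal)))
    (μ : Measure Ω) [IsProbabilityMeasure μ] :
    sSup {x : EReal | ∃ h, P h ∧ x = ePair h μ - sprice H h} =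
      sSup {x : EReal | ∃ h ∈ H, P h ∧ x = ePair h μ} := by
  apply le_antisymm
  · refine sSup_le ?_
    rintro x ⟨h, hP, rfl⟩
    obtain ⟨C, hC⟩ := hPb h hP
    have hne_bot : ∀ y, h y ≠ ⊥ := fun y =>
      ((EReal.bot_lt_coe (-C)).trans_le (by rw [EReal.coe_neg]; exact (hC y).1)).ne'
    have hne_top : ∀ y, h y ≠ ⊤ := fun y => ((hC y).2.trans_lt (EReal.coe_lt_top C)).ne
    set g : Ω → ℝ := fun y => (h y).toReal with hgdef
    have hrep : ∀ y, ((g y : ℝ) : EReal) = h y := fun y =>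
      EReal.coe_toReal (hne_top y) (hne_bot y)
    have hgm : Measurable g := (hPm h hP).ereal_toReal
    have hgb : ∀ y, |g y| ≤ C := by
      intro y
      rw [abs_le]
      constructor
      · have := (hC y).1; rw [← hrep y, ← EReal.coe_neg] at this; exact_mod_cast this
      · have := (hC y).2; rw [← hrep y] at this; exact_mod_cast this
    have heP : ePair h μ = ((∫ y, g y ∂μ : ℝ) : EReal) := by
      rw [← funext hrep]; exact ePair_coe_BK μ hgm hgb
    set r : ℝ := ∫ y, g y ∂μ with hrdef
    have hT : ∀ m : ℝ, (∃ h' ∈ H, ∀ y, h y ≤ (m : EReal) + h' y) →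
        ((r - m : ℝ) : EReal) ∈ {x : EReal | ∃ h ∈ H, P h ∧ x = ePair h μ} := by
      intro m hm
      obtain ⟨h', hH', hle⟩ := hm
      have hrw : (fun y => h y - (m : EReal)) = fun y => ((g y - m : ℝ) : EReal) :=
        funext fun y => by rw [EReal.coe_sub, hrep y]
      refine ⟨fun y => h y - (m : EReal), ?_, hPsub h m hP, ?_⟩
      · refine hmono _ ⟨?_, ⟨-C - m, fun y => ?_⟩⟩ ⟨h', hH', fun y => ?_⟩
        · rw [hrw]; exact measurable_coe_real_ereal.comp (hgm.sub measurable_const)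
        · rw [hrw]
          exact EReal.coe_le_coe_iff.2 (by have := (hgb y); rw [abs_le] at this; linarith)
        · exact EReal.sub_le_of_le_add' (hle y)
      · have hint : Integrable g μ := integrable_of_abs_le_BK μ hgm hgb
        have hib : ∀ y, |g y - m| ≤ C + |m| := fun y => by
          have := hgb y
          have h1 := abs_sub_abs_le_abs_sub (g y) m
          have := abs_sub (g y) m
          calc |g y - m| ≤ |g y| + |m| := abs_sub _ _
            _ ≤ C + |m| := by linarith [hgb y]
        rw [hrw, ePair_coe_BK μ (g := fun y => g y - m) (hgm.sub measurable_const) hib]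
        rw [integral_sub hint (integrable_const m), integral_const]
        simp
        rfl
    rcases Set.eq_empty_or_nonempty
        {m : ℝ | ∃ h' ∈ H, ∀ y, h y ≤ (m : EReal) + h' y} with hMe | hMne
    · have : sprice H h = ⊤ := by rw [sprice, hMe]; simp
      rw [this, EReal.sub_top]
      exact bot_le
    · obtain ⟨m₀, hm₀⟩ := hMne
      refine le_of_forall_lt fun c hc => ?_
      have hsb : ((-C : ℝ) : EReal) ≤ sprice H h := by
        refine le_sInf ?_
        rintro y ⟨m, hm, rfl⟩
        exact EReal.coe_le_coe_iff.2 (mem_lb_BK hmono hnorm (fun y => (hC y).1) hm)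
      have hst : sprice H h ≤ (m₀ : EReal) := sprice_le_of_mem_BK hm₀
      have hsnb : sprice H h ≠ ⊥ := fun hb => by
        rw [hb] at hsb; exact (EReal.coe_ne_bot _) (le_bot_iff.1 hsb)
      have hsnt : sprice H h ≠ ⊤ := fun ht => by
        rw [ht] at hst; exact (EReal.coe_ne_top _) (top_le_iff.1 hst)
      set s' : ℝ := (sprice H h).toReal with hs'def
      have hs : sprice H h = (s' : EReal) := (EReal.coe_toReal hsnt hsnb).symm
      rw [heP, hs] at hc
      rw [← EReal.coe_sub] at hc
      obtain ⟨c', hcc', hc'⟩ := EReal.lt_iff_exists_real_btwn.1 hc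
      have hsltr : sprice H h < ((r - c' : ℝ) : EReal) := by
        rw [hs]
        exact EReal.coe_lt_coe_iff.2 (by have := EReal.coe_lt_coe_iff.1 hc'; linarith)
      obtain ⟨y, ⟨m, hm, rfl⟩, hy⟩ := sInf_lt_iff.1 hsltr
      have hmlt : m < r - c' := EReal.coe_lt_coe_iff.1 hy
      refine lt_sSup_iff.2 ⟨((r - m : ℝ) : EReal), hT m hm, ?_⟩
      exact hcc'.trans (EReal.coe_lt_coe_iff.2 (by linarith))
  · refine sSup_le ?_
    rintro x ⟨h, hH, hP, rfl⟩
    have h0 : sprice H h ≤ 0 := by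
      have := sprice_le_of_mem_BK (h := h) (m := 0) ⟨h, hH, fun y => by simp⟩
      simpa using this
    refine le_sSup_of_le ⟨h, hP, rfl⟩ ?_
    calc ePair h μ = ePair h μ - 0 := by
          rw [sub_eq_add_neg, neg_zero, add_zero]
      _ ≤ ePair h μ - sprice H h := EReal.sub_le_sub le_rfl h0

end AuxBK

section AuxBK2

set_option linter.unusedSectionVars false

variable {Ω : Type*} [TopologicalSpace Ω] [MeasurableSpace Ω]

private lemma usc_sub_const_BK {h : Ω → EReal} (hh : UpperSemicontinuous h) (m : ℝ) :
    UpperSemicontinuous (fun x => h x - (m : EReal)) := by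
  intro x y hy
  have hiff : ∀ a : EReal, a - (m : EReal) < y ↔ a < y + (m : EReal) := fun a =>
    EReal.sub_lt_iff (Or.inl (EReal.coe_ne_bot m)) (Or.inl (EReal.coe_ne_top m))
  filter_upwards [hh x (y + m) ((hiff _).1 hy)] with z hz
  exact (hiff _).2 hz

private lemma cb_sub_const_BK {h : Ω → EReal} (hP : IsCbB h) (m : ℝ) :
    IsCbB (fun x => h x - (m : EReal)) := by
  obtain ⟨hc, C, hC⟩ := hP
  have hne_bot : ∀ y, h y ≠ ⊥ := fun y =>
    ((EReal.bot_lt_coe (-C)).trans_le (by rw [EReal.coe_neg]; exact (hC y).1)).ne'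
  have hne_top : ∀ y, h y ≠ ⊤ := fun y => ((hC y).2.trans_lt (EReal.coe_lt_top C)).ne
  have hrep : ∀ y, (((h y).toReal : ℝ) : EReal) = h y := fun y =>
    EReal.coe_toReal (hne_top y) (hne_bot y)
  have hgc : Continuous fun y => (h y).toReal :=
    EReal.continuousOn_toReal.comp_continuous hc fun y => by
      simp [hne_bot y, hne_top y]
  refine ⟨?_, C + |m|, bounds_sub_const_BK hC m⟩
  have hrw : (fun y => h y - (m : EReal)) = fun y => (((h y).toReal - m : ℝ) : EReal) :=
    funext fun y => by rw [EReal.coe_sub, hrep y]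
  rw [hrw]
  exact continuous_coe_real_ereal.comp (hgc.sub continuous_const)

private lemma ub_sub_const_BK {h : Ω → EReal} (hP : IsUbB h) (m : ℝ) :
    IsUbB (fun x => h x - (m : EReal)) := by
  obtain ⟨hc, C, hC⟩ := hP
  exact ⟨usc_sub_const_BK hc m, C + |m|, bounds_sub_const_BK hC m⟩

private lemma partB_BK {H : Set (Ω → EReal)} (hmono : MonotoneB H) (hnorm : NormalizedB H)
    (μ : Measure Ω) (hfin : IsFiniteMeasure μ) (hnp : ¬ IsProbabilityMeasure μ) :
    sSup {x : EReal | ∃ h, IsCbB h ∧ x = ePair h μ - sprice H h} = ⊤ := by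
  have ht : (μ Set.univ).toReal ≠ 1 := fun h1 =>
    hnp ⟨(ENNReal.toReal_eq_one_iff _).1 h1⟩
  rw [sSup_eq_top]
  intro b hb
  obtain ⟨rb, hrb, -⟩ := EReal.lt_iff_exists_real_btwn.1 hb
  set t : ℝ := (μ Set.univ).toReal with htdef
  set c : ℝ := (rb + 1) / (t - 1) with hcdef
  have hne : t - 1 ≠ 0 := sub_ne_zero.2 ht
  have hct : c * t - c = rb + 1 := by
    have h1 : c * (t - 1) = rb + 1 := div_mul_cancel₀ _ hne
    have h2 : c * (t - 1) = c * t - c := by ring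
    linarith
  have hcb : IsCbB (fun _ : Ω => (c : EReal)) :=
    ⟨continuous_const, |c|, fun x =>
      ⟨by rw [← EReal.coe_neg]; exact EReal.coe_le_coe_iff.2 (neg_abs_le c),
       EReal.coe_le_coe_iff.2 (le_abs_self c)⟩⟩
  haveI := hfin
  have heP : ePair (fun _ : Ω => (c : EReal)) μ = ((t * c : ℝ) : EReal) := by
    rw [ePair_coe_BK μ measurable_const (C := |c|) (fun x => le_refl |c|), integral_const]
    rw [smul_eq_mul]
    rfl
  refine ⟨((c * t - c : ℝ) : EReal), ⟨fun _ => (c : EReal), hcb, ?_⟩, ?_⟩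
  · rw [heP, sprice_const_BK hmono hnorm, ← EReal.coe_sub]
    exact congrArg _ (by ring)
  · rw [hct]
    exact hrb.trans (EReal.coe_lt_coe_iff.2 (by linarith))

end AuxBK2


/-- (From the proof of Proposition 2.4 in Bartl–Kupper, "A pointwise bipolar theorem".)
Let `H ⊆ L⁰_{b-}` be monotone and normalized and let
`φ(f) = inf{m ∈ ℝ : m + h ≥ f for some h ∈ H}`.  Then for every Borel probability measure
`μ` one has `sup_{f ∈ C_b} (⟨f,μ⟩ − φ(f)) = sup_{f ∈ H ∩ C_b} ⟨f,μ⟩` and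
`sup_{f ∈ U_b} (⟨f,μ⟩ − φ(f)) = sup_{f ∈ H ∩ U_b} ⟨f,μ⟩`; moreover, for every finite
positive Borel measure `μ` which is not a probability measure,
`sup_{f ∈ C_b} (⟨f,μ⟩ − φ(f)) = +∞`. -/
theorem sprice_conjugate
    {Ω : Type*} [MetricSpace Ω] [MeasurableSpace Ω] [BorelSpace Ω]
    (H : Set (Ω → EReal)) (hsub : H ⊆ L0b)
    (hmono : MonotoneB H) (hnorm : NormalizedB H) :
    (∀ μ : Measure Ω, IsProbabilityMeasure μ →
      sSup {x : EReal | ∃ h, IsCbB h ∧ x = ePair h μ - sprice H h} =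
        sSup {x : EReal | ∃ h ∈ H, IsCbB h ∧ x = ePair h μ} ∧
      sSup {x : EReal | ∃ h, IsUbB h ∧ x = ePair h μ - sprice H h} =
        sSup {x : EReal | ∃ h ∈ H, IsUbB h ∧ x = ePair h μ}) ∧
    (∀ μ : Measure Ω, IsFiniteMeasure μ → ¬ IsProbabilityMeasure μ →
      sSup {x : EReal | ∃ h, IsCbB h ∧ x = ePair h μ - sprice H h} = ⊤) := by
  constructor
  · intro μ hμ
    haveI := hμ
    constructor
    · exact key_prob_BK hmono hnorm IsCbB (fun h hP => hP.1.measurable) (fun h hP => hP.2)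
        (fun h m hP => cb_sub_const_BK hP m) μ
    · exact key_prob_BK hmono hnorm IsUbB (fun h hP => hP.1.measurable) (fun h hP => hP.2)
        (fun h m hP => ub_sub_const_BK hP m) μ
  · intro μ hfin hnp
    exact partB_BK hmono hnorm μ hfin hnp
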